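/- Let (W,S) be a Coxeter system and I ⊆ S. The right quotient W^I = {w : ℓ(ws) > ℓ(w) for all s ∈ I} satisfies the chain property: if u < w both lie in W^I, then there is a chain u = v₀ < v₁ < ⋯ < v_k = w in W^I with ℓ(v_{i+1}) = ℓ(v_i) + 1 for all i. -/

import Mathlib

open CoxeterSystem List Classical

variable {B W : Type*} [Group W] {M : CoxeterMatrix B}

section Aux

variable {G : Type*} [Group G]

private theorem conj_eq_iff (g x y : G) : g * x * g⁻¹ = y ↔ x = g⁻¹ * y * g := by
  constructor
  · rintro rfl; group
  · rintro rfl; group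

private theorem invol_conj_eq_iff {b : G} (hb : b * b = 1) (x y : G) :
    b * x * b = y ↔ x = b * y * b := by
  constructor
  · rintro rfl
    have h : b * (b * x * b) * b = (b * b) * x * (b * b) := by group
    rw [h, hb, one_mul, mul_one]
  · rintro rfl
    have h : b * (b * y * b) * b = (b * b) * y * (b * b) := by group
    rw [h, hb, one_mul, mul_one]

private theorem conj_pow_aux (b d : G) (n : ℕ) :
    b * d ^ n * b⁻¹ = (b * d * b⁻¹) ^ n := by
  induction n with
  | zero => simp
  | succ n ih =>
    rw [pow_succ, pow_succ, ← ih]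
    group

private theorem count_pair_flatMap {α : Type*} [DecidableEq α] (u v : ℕ → α) (t : α) :
    ∀ l : List ℕ, List.count t (l.flatMap fun k => [u k, v k])
      = List.count t (l.map u) + List.count t (l.map v) := by
  intro l
  induction l with
  | nil => simp
  | cons a l ih =>
    simp only [List.flatMap_cons, List.map_cons, List.count_append, List.count_cons, ih]
    simp [List.count_cons]
    omega

private theorem exists_min_witness {p : ℕ → Prop} (h : ∃ r, p r) :
    ∃ T, p T ∧ ∀ r < T, ¬ p r := by
  classical
  exact ⟨Nat.find h, Nat.find_spec h, fun r hr => Nat.find_min h hr⟩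

end Aux

namespace CoxeterBruhat

/-- One edge in the Bruhat graph: `v = t * u` for a reflection `t`, with `ℓ(u) < ℓ(v)`. -/
def Step (cs : CoxeterSystem M W) (u v : W) : Prop :=
  ∃ t : W, cs.IsReflection t ∧ v = t * u ∧ cs.length u < cs.length v

/-- The Bruhat order, as the reflexive-transitive closure of `Step`. -/
def BruhatLE (cs : CoxeterSystem M W) : W → W → Prop :=
  Relation.ReflTransGen (Step cs)

/-- The standard parabolic subgroup generated by the simple reflections indexed by `I`. -/
def parabolic (cs : CoxeterSystem M W) (I : Set B) : Subgroup W :=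
  Subgroup.closure (cs.simple '' I)

/-- The left descent set `D_L(w)`. -/
def leftDescents (cs : CoxeterSystem M W) (w : W) : Set B :=
  {i | cs.IsLeftDescent w i}

/-- The right descent set `D_R(w)`. -/
def rightDescents (cs : CoxeterSystem M W) (w : W) : Set B :=
  {i | cs.IsRightDescent w i}

/-- The double coset `W_I u W_J` as a set. -/
def doubleCoset (cs : CoxeterSystem M W) (I J : Set B) (u : W) : Set W :=
  {v | ∃ x ∈ parabolic cs I, ∃ y ∈ parabolic cs J, v = x * u * y}

/-- The Bruhat coset `C_w(u) = W_{D_L(w)} u W_{D_R(w)}`. -/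
def bCoset (cs : CoxeterSystem M W) (w u : W) : Set W :=
  doubleCoset cs (leftDescents cs w) (rightDescents cs w) u

/-- The lower Bruhat interval `B(w) = [e, w]`. -/
def lowerInterval (cs : CoxeterSystem M W) (w : W) : Set W :=
  {v | BruhatLE cs v w}

/-- The support `S(v)` of `v`: simple reflections below `v` in Bruhat order. -/
def support (cs : CoxeterSystem M W) (v : W) : Set B :=
  {i | BruhatLE cs (cs.simple i) v}




variable (cs : CoxeterSystem M W)

local prefix:100 "s" => cs.simple
local prefix:100 "π" => cs.wordProd
local prefix:100 "ℓ" => cs.length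
local prefix:100 "ris" => cs.rightInvSeq
local prefix:100 "lis" => cs.leftInvSeq

open scoped Classical in
/-- The function underlying the parity representation. -/
noncomputable def gfun (i : B) : W × ZMod 2 → W × ZMod 2 :=
  fun p => (s i * p.1 * s i, p.2 + if p.1 = s i then 1 else 0)

theorem zmod2_add_self (e : ZMod 2) : e + e = 0 := by revert e; decide

theorem gfun_involutive (i : B) : Function.Involutive (gfun cs i) := by
  rintro ⟨t, e⟩
  have h : (s i * t * s i = s i) ↔ (t = s i) := by
    rw [invol_conj_eq_iff (cs.simple_mul_simple_self i)]
    rw [cs.simple_mul_simple_cancel_right]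
  simp only [gfun, Prod.mk.injEq]
  constructor
  · simp [mul_assoc, cs.simple_mul_simple_cancel_left, cs.simple_mul_simple_cancel_right]
  · simp only [h]
    by_cases ht : t = s i
    · simp only [if_pos ht]; rw [add_assoc]
      norm_num
      exact zmod2_add_self 1
    · simp only [if_neg ht]; ring

/-- The permutation of `W × ZMod 2` associated to a simple reflection. -/
noncomputable def gperm (i : B) : Equiv.Perm (W × ZMod 2) :=
  Function.Involutive.toPerm (gfun cs i) (gfun_involutive cs i)

theorem gperm_apply (i : B) (p : W × ZMod 2) : gperm cs i p = gfun cs i p := rfl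

section Braid

variable (i j : B)

private noncomputable def uu (k : ℕ) : W :=
  ((s i * s j) ^ k)⁻¹ * s j * (s i * s j) ^ k

private noncomputable def vv (k : ℕ) : W :=
  ((s i * s j) ^ k)⁻¹ * (s j * s i * s j) * (s i * s j) ^ k

private noncomputable def LL (m : ℕ) : List W :=
  (List.range m).flatMap fun k => [uu cs i j k, vv cs i j k]

open scoped Classical in
private theorem gperm_pow_apply (m : ℕ) (t : W) (e : ZMod 2) :
    ((gperm cs i * gperm cs j) ^ m) (t, e) =
      ((s i * s j) ^ m * t * ((s i * s j) ^ m)⁻¹,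
        e + (List.count t (LL cs i j m) : ZMod 2)) := by
  induction m with
  | zero => simp [LL]
  | succ m ih =>
    rw [pow_succ' (gperm cs i * gperm cs j) m, Equiv.Perm.mul_apply, ih, Equiv.Perm.mul_apply,
      gperm_apply, gperm_apply]
    simp only [gfun]
    have hcond1 : ((s i * s j) ^ m * t * ((s i * s j) ^ m)⁻¹ = s j) ↔ t = uu cs i j m := by
      rw [conj_eq_iff, uu]
    have hcond2 : (s j * ((s i * s j) ^ m * t * ((s i * s j) ^ m)⁻¹) * s j = s i)
        ↔ t = vv cs i j m := by
      rw [invol_conj_eq_iff (cs.simple_mul_simple_self j), conj_eq_iff, vv]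
    rw [Prod.mk.injEq]
    constructor
    · rw [pow_succ' (s i * s j) m, mul_inv_rev (s i * s j) ((s i * s j) ^ m),
        mul_inv_rev (s i) (s j), cs.inv_simple, cs.inv_simple]
      group
    · simp only [hcond1, hcond2]
      have hLL : LL cs i j (m + 1) = LL cs i j m ++ [uu cs i j m, vv cs i j m] := by
        rw [LL, LL, List.range_succ, List.flatMap_append]
        simp
      rw [hLL, List.count_append]
      simp only [List.count_cons, List.count_nil, beq_iff_eq]
      have hcomm : ∀ a b : W, (if a = b then (1 : ZMod 2) else 0) = if b = a then 1 else 0 := by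
        intro a b
        by_cases h : a = b
        · subst h; simp
        · rw [if_neg h, if_neg fun hh => h hh.symm]
      push_cast
      rw [hcomm t (uu cs i j m), hcomm t (vv cs i j m)]
      ring

private theorem simple_mul_pow_swap (n : ℕ) :
    s j * (s i * s j) ^ n = ((s i * s j) ^ n)⁻¹ * s j := by
  have h := conj_pow_aux (s j) (s i * s j) n
  rw [cs.inv_simple j] at h
  have hkey : s j * (s i * s j) * s j = (s i * s j)⁻¹ := by
    rw [mul_inv_rev, cs.inv_simple, cs.inv_simple, mul_assoc, mul_assoc,
      cs.simple_mul_simple_self, mul_one]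
  rw [hkey, inv_pow] at h
  calc s j * (s i * s j) ^ n = (s j * (s i * s j) ^ n * s j) * s j := by
        rw [mul_assoc _ (s j) (s j), cs.simple_mul_simple_self, mul_one]
    _ = ((s i * s j) ^ n)⁻¹ * s j := by rw [h]

private theorem conj_pow_simple (n : ℕ) :
    ((s i * s j) ^ n)⁻¹ * s j * (s i * s j) ^ n = ((s i * s j) ^ (n + n))⁻¹ * s j := by
  rw [mul_assoc, simple_mul_pow_swap, pow_add, mul_inv_rev]
  group

private theorem bab_eq : s j * s i * s j = (s i * s j)⁻¹ * s j := by
  rw [mul_inv_rev, cs.inv_simple, cs.inv_simple, mul_assoc]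

private theorem inv_comm_aux (h : ℕ) :
    ((s i * s j) ^ h)⁻¹ * (s i * s j)⁻¹ = (s i * s j)⁻¹ * ((s i * s j) ^ h)⁻¹ := by
  rw [← mul_inv_rev, ← mul_inv_rev, ← pow_succ, ← pow_succ']

private theorem uu_even_shift {m : ℕ} (h k : ℕ) (hm : m = h + h) (hc : (s i * s j) ^ m = 1) :
    uu cs i j (h + k) = uu cs i j k := by
  have middle : ((s i * s j) ^ h)⁻¹ * s j * (s i * s j) ^ h = s j := by
    rw [conj_pow_simple, ← hm, hc]
    simp
  rw [uu, uu, pow_add,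
    show ((s i * s j) ^ h * (s i * s j) ^ k)⁻¹ * s j * ((s i * s j) ^ h * (s i * s j) ^ k)
      = ((s i * s j) ^ k)⁻¹ * (((s i * s j) ^ h)⁻¹ * s j * (s i * s j) ^ h) * (s i * s j) ^ k
      from by group, middle]

private theorem vv_even_shift {m : ℕ} (h k : ℕ) (hm : m = h + h) (hc : (s i * s j) ^ m = 1) :
    vv cs i j (h + k) = vv cs i j k := by
  have middle : ((s i * s j) ^ h)⁻¹ * s j * (s i * s j) ^ h = s j := by
    rw [conj_pow_simple, ← hm, hc]
    simp
  have middle2 : ((s i * s j) ^ h)⁻¹ * (s j * s i * s j) * (s i * s j) ^ h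
      = s j * s i * s j := by
    rw [bab_eq]
    calc ((s i * s j) ^ h)⁻¹ * ((s i * s j)⁻¹ * s j) * (s i * s j) ^ h
        = (((s i * s j) ^ h)⁻¹ * (s i * s j)⁻¹) * s j * (s i * s j) ^ h := by
          rw [mul_assoc (((s i * s j) ^ h)⁻¹) _ (s j)]
      _ = ((s i * s j)⁻¹ * ((s i * s j) ^ h)⁻¹) * s j * (s i * s j) ^ h := by
          rw [inv_comm_aux]
      _ = (s i * s j)⁻¹ * (((s i * s j) ^ h)⁻¹ * s j * (s i * s j) ^ h) := by
          rw [mul_assoc, mul_assoc, mul_assoc]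
      _ = (s i * s j)⁻¹ * s j := by rw [middle]
  rw [vv, vv, pow_add,
    show ((s i * s j) ^ h * (s i * s j) ^ k)⁻¹ * (s j * s i * s j) * ((s i * s j) ^ h * (s i * s j) ^ k)
      = ((s i * s j) ^ k)⁻¹ * (((s i * s j) ^ h)⁻¹ * (s j * s i * s j) * (s i * s j) ^ h) * (s i * s j) ^ k
      from by group, middle2]

private theorem vv_eq_uu_shift {m : ℕ} (h' k : ℕ) (hm : m + 1 = h' + h')
    (hc : (s i * s j) ^ m = 1) : vv cs i j k = uu cs i j (k + h') := by
  have middle : ((s i * s j) ^ h')⁻¹ * s j * (s i * s j) ^ h' = (s i * s j)⁻¹ * s j := by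
    rw [conj_pow_simple, ← hm, pow_succ, hc, one_mul]
  rw [uu, vv, bab_eq, add_comm k h', pow_add,
    show ((s i * s j) ^ h' * (s i * s j) ^ k)⁻¹ * s j * ((s i * s j) ^ h' * (s i * s j) ^ k)
      = ((s i * s j) ^ k)⁻¹ * (((s i * s j) ^ h')⁻¹ * s j * (s i * s j) ^ h') * (s i * s j) ^ k
      from by group, middle]

private theorem uu_mod {m : ℕ} (hc : (s i * s j) ^ m = 1) (n : ℕ) :
    uu cs i j n = uu cs i j (n % m) := by
  rw [uu, uu, pow_eq_pow_mod n hc]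

private theorem count_LL_zero {m : ℕ} (hc : (s i * s j) ^ m = 1) (t : W) :
    (List.count t (LL cs i j m) : ZMod 2) = 0 := by
  classical
  rw [LL, count_pair_flatMap]
  push_cast
  rcases Nat.even_or_odd m with ⟨h, hm⟩ | ⟨h, hm⟩
  · have huu : List.count t ((List.range m).map (uu cs i j))
        = List.count t ((List.range h).map (uu cs i j))
          + List.count t ((List.range h).map (uu cs i j)) := by
      rw [hm, List.range_add, List.map_append, List.count_append, List.map_map]
      congr 2
      apply List.map_congr_left
      intro k _
      exact uu_even_shift cs i j h k hm hc
    have hvv : List.count t ((List.range m).map (vv cs i j))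
        = List.count t ((List.range h).map (vv cs i j))
          + List.count t ((List.range h).map (vv cs i j)) := by
      rw [hm, List.range_add, List.map_append, List.count_append, List.map_map]
      congr 2
      apply List.map_congr_left
      intro k _
      exact vv_even_shift cs i j h k hm hc
    rw [huu, hvv]
    push_cast
    rw [zmod2_add_self, zmod2_add_self, add_zero]
  · have hm' : m + 1 = (h + 1) + (h + 1) := by omega
    have hperm : (List.range m).map (vv cs i j)
        = ((List.range m).rotate (h + 1)).map (uu cs i j) := by
      apply List.ext_getElem
      · simp
      · intro k h1 h2
        simp only [List.getElem_map, List.getElem_rotate, List.length_range, List.getElem_range]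
        rw [← uu_mod cs i j hc, ← vv_eq_uu_shift cs i j (h + 1) k hm' hc]
    rw [hperm, ((List.rotate_perm (List.range m) (h + 1)).map (uu cs i j)).count_eq t]
    exact zmod2_add_self _

end Braid

theorem gperm_liftable : M.IsLiftable (gperm cs) := by
  intro i j
  apply Equiv.ext
  rintro ⟨t, e⟩
  rw [gperm_pow_apply, cs.simple_mul_simple_pow i j,
    count_LL_zero cs i j (cs.simple_mul_simple_pow i j) t]
  simp

/-! ### The parity function and the strong exchange property -/

/-- The parity representation `W →* Perm (W × ZMod 2)`. -/
noncomputable def phi : W →* Equiv.Perm (W × ZMod 2) :=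
  cs.lift ⟨gperm cs, gperm_liftable cs⟩

theorem phi_simple (i : B) : phi cs (s i) = gperm cs i :=
  cs.lift_apply_simple (gperm_liftable cs) i

open scoped Classical in
theorem phi_wordProd (ω : List B) (t : W) (e : ZMod 2) :
    phi cs (π ω) (t, e) = (π ω * t * (π ω)⁻¹, e + (List.count t (ris ω) : ZMod 2)) := by
  induction ω with
  | nil => simp
  | cons i ω ih =>
    rw [cs.wordProd_cons, map_mul, Equiv.Perm.mul_apply, ih, phi_simple, gperm_apply]
    simp only [gfun]
    have hris : ris (i :: ω) = (π ω)⁻¹ * s i * π ω :: ris ω := rfl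
    have hcond : (π ω * t * (π ω)⁻¹ = s i) ↔ t = (π ω)⁻¹ * s i * π ω := conj_eq_iff _ _ _
    rw [Prod.mk.injEq]
    constructor
    · rw [mul_inv_rev (s i) (π ω), cs.inv_simple]
      group
    · rw [if_congr hcond rfl rfl, hris, List.count_cons]
      have hcomm : ∀ a b : W, (if a = b then (1 : ZMod 2) else 0) = if b = a then 1 else 0 := by
        intro a b
        by_cases h : a = b
        · subst h; simp
        · rw [if_neg h, if_neg fun hh => h hh.symm]
      push_cast
      simp only [beq_iff_eq]
      rw [hcomm t ((π ω)⁻¹ * s i * π ω)]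
      ring

/-- The parity of the number of occurrences of `t` in the (right) inversion sequence of any
word for `w`. -/
noncomputable def refpar (w t : W) : ZMod 2 := (phi cs w (t, 0)).2

theorem refpar_eq_count (ω : List B) (t : W) :
    refpar cs (π ω) t = (List.count t (ris ω) : ZMod 2) := by
  rw [refpar, phi_wordProd, zero_add]

theorem phi_apply (w t : W) (e : ZMod 2) :
    phi cs w (t, e) = (w * t * w⁻¹, e + refpar cs w t) := by
  obtain ⟨ω, _, rfl⟩ := cs.exists_reduced_word' w
  rw [phi_wordProd, refpar_eq_count cs ω t]

theorem refpar_mul (w v t : W) :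
    refpar cs (w * v) t = refpar cs v t + refpar cs w (v * t * v⁻¹) := by
  have h := phi_apply cs (w * v) t 0
  rw [map_mul, Equiv.Perm.mul_apply, phi_apply, phi_apply] at h
  have := congrArg Prod.snd h
  simp only at this
  rw [refpar, map_mul, Equiv.Perm.mul_apply, phi_apply, phi_apply]
  simp [add_assoc]

theorem refpar_one (t : W) : refpar cs 1 t = 0 := by
  have := refpar_eq_count cs [] t
  simpa using this

theorem zmod2_eq_of_add_eq_zero {a b : ZMod 2} (h : a + b = 0) : b = a := by
  revert a b; decide

theorem refpar_inv (w t : W) : refpar cs w⁻¹ (w * t * w⁻¹) = refpar cs w t := by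
  apply zmod2_eq_of_add_eq_zero
  have := refpar_mul cs w⁻¹ w t
  rw [inv_mul_cancel, refpar_one] at this
  exact this.symm

theorem refpar_simple_self (i : B) : refpar cs (s i) (s i) = 1 := by
  have := refpar_eq_count cs [i] (s i)
  rw [cs.rightInvSeq_singleton, cs.wordProd_singleton] at this
  simpa using this

theorem refpar_reflection_self {t : W} (ht : cs.IsReflection t) : refpar cs t t = 1 := by
  obtain ⟨w, i, rfl⟩ := ht
  have h1 : refpar cs (w * s i * w⁻¹) (w * s i * w⁻¹)
      = refpar cs w⁻¹ (w * s i * w⁻¹) + refpar cs (w * s i) (s i) := by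
    have := refpar_mul cs (w * s i) w⁻¹ (w * s i * w⁻¹)
    rw [show w⁻¹ * (w * s i * w⁻¹) * w⁻¹⁻¹ = s i from by group] at this
    rw [← this]
  have h2 : refpar cs (w * s i) (s i) = refpar cs (s i) (s i) + refpar cs w (s i) := by
    have := refpar_mul cs w (s i) (s i)
    rw [show s i * s i * (s i)⁻¹ = s i from by group] at this
    exact this
  rw [h1, h2, refpar_inv, refpar_simple_self]
  rw [add_comm (1 : ZMod 2), ← add_assoc, zmod2_add_self, zero_add]


theorem refpar_mul_reflection (w : W) {t : W} (ht : cs.IsReflection t) :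
    refpar cs (w * t) t = refpar cs w t + 1 := by
  have h := refpar_mul cs w t t
  rw [show t * t * t⁻¹ = t from by rw [ht.mul_self, one_mul, ht.inv], refpar_reflection_self cs ht] at h
  rw [h, add_comm]

theorem zmod2_cases (x : ZMod 2) : x = 0 ∨ x = 1 := by revert x; decide

open scoped Classical in
theorem mem_ris_iff_refpar {ω : List B} (hω : cs.IsReduced ω) (t : W) :
    t ∈ ris ω ↔ refpar cs (π ω) t = 1 := by
  constructor
  · intro h
    rw [refpar_eq_count cs ω t, List.count_eq_one_of_mem (hω.nodup_rightInvSeq) h]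
    rfl
  · intro h
    by_contra hmem
    rw [refpar_eq_count cs ω t, List.count_eq_zero.mpr hmem] at h
    simp at h

theorem refpar_eq_one_of_lt {w t : W} (ht : cs.IsReflection t) (hl : ℓ (w * t) < ℓ w) :
    refpar cs w t = 1 := by
  rcases zmod2_cases (refpar cs w t) with h0 | h1
  · exfalso
    have h1 : refpar cs (w * t) t = 1 := by
      rw [refpar_mul_reflection cs w ht, h0, zero_add]
    obtain ⟨α, hα, heq⟩ := cs.exists_reduced_word' (w * t)
    rw [heq] at h1
    have hmem : t ∈ ris α := (mem_ris_iff_refpar cs hα t).mpr h1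
    have hinv := cs.isRightInversion_of_mem_rightInvSeq hα hmem
    rw [← heq] at hinv
    have : w * t * t = w := by rw [mul_assoc, ht.mul_self, mul_one]
    rw [CoxeterSystem.IsRightInversion, this] at hinv
    omega
  · exact h1

/-- The strong exchange property, right version. -/
theorem exists_right_exchange {w t : W} (ht : cs.IsReflection t) (hl : ℓ (w * t) < ℓ w)
    {ω : List B} (hω : cs.IsReduced ω) (heq : π ω = w) :
    ∃ j, j < ω.length ∧ w * t = π (ω.eraseIdx j) := by
  have hpar : refpar cs w t = 1 := refpar_eq_one_of_lt cs ht hl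
  rw [← heq] at hpar
  have hmem : t ∈ ris ω := (mem_ris_iff_refpar cs hω t).mpr hpar
  obtain ⟨j, hj, hel⟩ := List.mem_iff_getElem.mp hmem
  rw [cs.length_rightInvSeq] at hj
  refine ⟨j, hj, ?_⟩
  have := cs.wordProd_mul_getD_rightInvSeq ω j
  rw [List.getD_eq_getElem _ 1 (by rw [cs.length_rightInvSeq]; exact hj), hel, heq] at this
  exact this

/-- The strong exchange property, left version. -/
theorem exists_left_exchange {w t : W} (ht : cs.IsReflection t) (hl : ℓ (t * w) < ℓ w)
    {ω : List B} (hω : cs.IsReduced ω) (heq : π ω = w) :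
    ∃ j, j < ω.length ∧ t * w = π (ω.eraseIdx j) := by
  have hrev : π ω.reverse = w⁻¹ := by rw [cs.wordProd_reverse, heq]
  have hωrev : cs.IsReduced ω.reverse := (cs.isReduced_reverse_iff ω).mpr hω
  have hlrev : ℓ (w⁻¹ * t) < ℓ w⁻¹ := by
    have : (w⁻¹ * t)⁻¹ = t * w := by rw [mul_inv_rev, inv_inv, ht.inv]
    rw [← cs.length_inv (w⁻¹ * t), this, cs.length_inv]
    exact hl
  have hpar : refpar cs w⁻¹ t = 1 := refpar_eq_one_of_lt cs ht hlrev
  rw [← hrev] at hpar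
  have hmem : t ∈ ris ω.reverse := (mem_ris_iff_refpar cs hωrev t).mpr hpar
  rw [cs.rightInvSeq_reverse, List.mem_reverse] at hmem
  obtain ⟨j, hj, hel⟩ := List.mem_iff_getElem.mp hmem
  rw [cs.length_leftInvSeq] at hj
  refine ⟨j, hj, ?_⟩
  have := cs.getD_leftInvSeq_mul_wordProd ω j
  rw [List.getD_eq_getElem _ 1 (by rw [cs.length_leftInvSeq]; exact hj), hel, heq] at this
  exact this

/-! ### Bruhat order basics -/

theorem step_lt {u v : W} (h : Step cs u v) : ℓ u < ℓ v := by
  obtain ⟨t, _, _, hlt⟩ := h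
  exact hlt

theorem length_le_of_le {u w : W} (h : BruhatLE cs u w) : ℓ u ≤ ℓ w := by
  induction h with
  | refl => exact le_rfl
  | tail _ hstep ih => exact ih.trans (step_lt cs hstep).le

theorem eq_of_le_of_length_le {u w : W} (h : BruhatLE cs u w) (hlen : ℓ w ≤ ℓ u) : u = w := by
  rcases Relation.ReflTransGen.cases_tail h with h' | ⟨x, hux, hxw⟩
  · exact h'.symm
  · have h1 := length_le_of_le cs hux
    have h2 := step_lt cs hxw
    omega

theorem step_simple_mul {w : W} (i : B) (h : ℓ w < ℓ (s i * w)) : Step cs w (s i * w) :=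
  ⟨s i, cs.isReflection_simple i, rfl, h⟩

theorem step_simple_mul' {w : W} (i : B) (h : ℓ (s i * w) < ℓ w) : Step cs (s i * w) w := by
  refine ⟨s i, cs.isReflection_simple i, ?_, h⟩
  rw [cs.simple_mul_simple_cancel_left]

theorem bruhatLE_inv {u w : W} (h : BruhatLE cs u w) : BruhatLE cs u⁻¹ w⁻¹ := by
  induction h with
  | refl => exact Relation.ReflTransGen.refl
  | @tail b c hb hstep ih =>
    obtain ⟨t, ht, rfl, hlen⟩ := hstep
    refine ih.tail ⟨b⁻¹ * t * (b⁻¹)⁻¹, ht.conj b⁻¹, ?_, ?_⟩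
    · rw [inv_inv, mul_inv_rev, ht.inv]
      group
    · rwa [cs.length_inv, cs.length_inv]

open scoped Classical in
/-- The key lifting lemma: left multiplication by `s i` is monotone on `{x, s i x}`-pairs. -/
theorem lift_minmax : ∀ n : ℕ, ∀ u w : W, ℓ w ≤ n → BruhatLE cs u w → ∀ i : B,
    BruhatLE cs (if ℓ (s i * u) < ℓ u then s i * u else u)
      (if ℓ (s i * w) < ℓ w then s i * w else w) ∧
    BruhatLE cs (if ℓ (s i * u) < ℓ u then u else s i * u)
      (if ℓ (s i * w) < ℓ w then w else s i * w) := by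
  intro n
  induction n using Nat.strong_induction_on with
  | _ n IH =>
  intro u w hwn hle i
  rcases Relation.ReflTransGen.cases_tail hle with h' | ⟨x, hux, hxw⟩
  · subst h'
    exact ⟨Relation.ReflTransGen.refl, Relation.ReflTransGen.refl⟩
  · have hxlt : ℓ x < ℓ w := step_lt cs hxw
    have hpair := IH (ℓ x) (by omega) u x le_rfl hux i
    suffices hstep : BruhatLE cs (if ℓ (s i * x) < ℓ x then s i * x else x)
        (if ℓ (s i * w) < ℓ w then s i * w else w) ∧
        BruhatLE cs (if ℓ (s i * x) < ℓ x then x else s i * x)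
        (if ℓ (s i * w) < ℓ w then w else s i * w) by
      exact ⟨hpair.1.trans hstep.1, hpair.2.trans hstep.2⟩
    clear hpair hux hle
    obtain ⟨t, ht, rfl, hlen⟩ := hxw
    have hdx := cs.length_simple_mul x i
    have hdw := cs.length_simple_mul (t * x) i
    have hconj : s i * (t * x) = (s i * t * (s i)⁻¹) * (s i * x) := by
      rw [cs.inv_simple, mul_assoc (s i * t) (s i) (s i * x),
        cs.simple_mul_simple_cancel_left, mul_assoc]
    rcases Nat.lt_or_ge (ℓ (s i * x)) (ℓ x) with hxd | hxu'
    · rcases Nat.lt_or_ge (ℓ (s i * (t * x))) (ℓ (t * x)) with hwd | hwu'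
      · -- both down
        rw [if_pos hxd, if_pos hwd, if_pos hxd, if_pos hwd]
        constructor
        · exact Relation.ReflTransGen.single
            ⟨s i * t * (s i)⁻¹, ht.conj (s i), hconj, by omega⟩
        · exact Relation.ReflTransGen.single ⟨t, ht, rfl, hlen⟩
      · have hwu : ℓ (t * x) < ℓ (s i * (t * x)) :=
          lt_of_le_of_ne hwu' (cs.length_simple_mul_ne (t * x) i).symm
        have hnwd : ¬ ℓ (s i * (t * x)) < ℓ (t * x) := by omega
        rw [if_pos hxd, if_neg hnwd, if_pos hxd, if_neg hnwd]
        constructor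
        · exact (Relation.ReflTransGen.single (step_simple_mul' cs i hxd)).tail
            ⟨t, ht, rfl, hlen⟩
        · exact (Relation.ReflTransGen.single ⟨t, ht, rfl, hlen⟩).tail
            (step_simple_mul cs i hwu)
    · have hxu : ℓ x < ℓ (s i * x) :=
        lt_of_le_of_ne hxu' (cs.length_simple_mul_ne x i).symm
      have hnxd : ¬ ℓ (s i * x) < ℓ x := by omega
      rcases Nat.lt_or_ge (ℓ (s i * (t * x))) (ℓ (t * x)) with hwd | hwu'
      · -- hard case : x up, w down
        rw [if_neg hnxd, if_pos hwd, if_neg hnxd, if_pos hwd]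
        obtain ⟨α, hα, hαeq⟩ := cs.exists_reduced_word' (s i * (t * x))
        have hαlen : α.length = ℓ (s i * (t * x)) := by rw [hαeq]; exact hα.symm
        have hωeq : π (i :: α) = t * x := by
          rw [cs.wordProd_cons, ← hαeq, cs.simple_mul_simple_cancel_left]
        have hω : cs.IsReduced (i :: α) := by
          show ℓ (π (i :: α)) = (i :: α).length
          rw [hωeq]
          simp only [List.length_cons]
          omega
        have htinv : ℓ (t * (t * x)) < ℓ (t * x) := by
          rw [← mul_assoc, ht.mul_self, one_mul]
          exact hlen
        obtain ⟨j, hj, hex⟩ := exists_left_exchange cs ht htinv hω hωeq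
        rw [← mul_assoc, ht.mul_self, one_mul] at hex
        match j, hj with
        | 0, _ =>
          rw [List.eraseIdx_cons_zero, ← hαeq] at hex
          -- hex : x = s i * (t * x)
          constructor
          · rw [show (s i * (t * x)) = x from hex.symm]
            exact Relation.ReflTransGen.refl
          · have h2 : s i * x = t * x := by
              conv_lhs => rw [hex, cs.simple_mul_simple_cancel_left]
            rw [h2]
            exact Relation.ReflTransGen.refl
        | (j + 1), hj =>
          rw [List.eraseIdx_cons_succ] at hex
          simp only [List.length_cons] at hj
          have hjα : j < α.length := by omega
          rw [cs.wordProd_cons] at hex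
          set z := π (α.eraseIdx j) with hz
          have hsx : s i * x = z := by rw [hex, cs.simple_mul_simple_cancel_left]
          have hzlen : ℓ z < ℓ (s i * (t * x)) := by
            have h1 := cs.length_wordProd_le (α.eraseIdx j)
            rw [← hz] at h1
            have h2 : (α.eraseIdx j).length + 1 = α.length :=
              List.length_eraseIdx_add_one hjα
            omega
          have hzstep : Step cs z (s i * (t * x)) := by
            have hmem : (lis α).getD j 1 ∈ lis α := by
              rw [List.getD_eq_getElem _ 1 (by rw [cs.length_leftInvSeq]; exact hjα)]
              exact List.getElem_mem _
            have ht2 : cs.IsReflection ((lis α).getD j 1) :=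
              cs.isReflection_of_mem_leftInvSeq α hmem
            refine ⟨(lis α).getD j 1, ht2, ?_, hzlen⟩
            have h3 := cs.getD_leftInvSeq_mul_wordProd α j
            rw [← hz, ← hαeq] at h3
            have h4 := congrArg (fun y => (lis α).getD j 1 * y) h3
            rw [← mul_assoc, ht2.mul_self, one_mul] at h4
            exact h4
          constructor
          · have hIH := IH (ℓ (s i * (t * x))) (by omega) z (s i * (t * x)) le_rfl
              (Relation.ReflTransGen.single hzstep) i
            have hc1 : ℓ (s i * z) < ℓ z := by
              rw [← hsx, cs.simple_mul_simple_cancel_left]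
              omega
            have hc2 : ¬ ℓ (s i * (s i * (t * x))) < ℓ (s i * (t * x)) := by
              rw [cs.simple_mul_simple_cancel_left]
              omega
            have h5 := hIH.1
            rw [if_pos hc1, if_neg hc2, ← hsx, cs.simple_mul_simple_cancel_left] at h5
            exact h5
          · rw [hsx]
            exact (Relation.ReflTransGen.single hzstep).tail (step_simple_mul' cs i hwd)
      · have hwu : ℓ (t * x) < ℓ (s i * (t * x)) :=
          lt_of_le_of_ne hwu' (cs.length_simple_mul_ne (t * x) i).symm
        have hnwd : ¬ ℓ (s i * (t * x)) < ℓ (t * x) := by omega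
        rw [if_neg hnxd, if_neg hnwd, if_neg hnxd, if_neg hnwd]
        constructor
        · exact Relation.ReflTransGen.single ⟨t, ht, rfl, hlen⟩
        · exact Relation.ReflTransGen.single
            ⟨s i * t * (s i)⁻¹, ht.conj (s i), hconj, by omega⟩

/-! ### Lifting corollaries, Deodhar's lemma and quotient facts -/

theorem lift_ud_min {u w : W} {i : B} (h : BruhatLE cs u w) (hu : ℓ u < ℓ (s i * u))
    (hw : ℓ (s i * w) < ℓ w) : BruhatLE cs u (s i * w) := by
  have H := (lift_minmax cs (ℓ w) u w le_rfl h i).1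
  rwa [if_neg (by omega), if_pos hw] at H

theorem lift_ud_max {u w : W} {i : B} (h : BruhatLE cs u w) (hu : ℓ u < ℓ (s i * u))
    (hw : ℓ (s i * w) < ℓ w) : BruhatLE cs (s i * u) w := by
  have H := (lift_minmax cs (ℓ w) u w le_rfl h i).2
  rwa [if_neg (by omega), if_pos hw] at H

theorem lift_dd {u w : W} {i : B} (h : BruhatLE cs u w) (hu : ℓ (s i * u) < ℓ u)
    (hw : ℓ (s i * w) < ℓ w) : BruhatLE cs (s i * u) (s i * w) := by
  have H := (lift_minmax cs (ℓ w) u w le_rfl h i).1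
  rwa [if_pos hu, if_pos hw] at H

theorem lift_uu {u w : W} {i : B} (h : BruhatLE cs u w) (hu : ℓ u < ℓ (s i * u))
    (hw : ℓ w < ℓ (s i * w)) : BruhatLE cs (s i * u) (s i * w) := by
  have H := (lift_minmax cs (ℓ w) u w le_rfl h i).2
  rwa [if_neg (by omega), if_neg (by omega)] at H

theorem lift_ud_min_right {u w : W} {j : B} (h : BruhatLE cs u w) (hu : ℓ u < ℓ (u * s j))
    (hw : ℓ (w * s j) < ℓ w) : BruhatLE cs u (w * s j) := by
  have e1 : ∀ v : W, s j * v⁻¹ = (v * s j)⁻¹ := by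
    intro v
    rw [mul_inv_rev, cs.inv_simple]
  have hu' : ℓ u⁻¹ < ℓ (s j * u⁻¹) := by
    rw [e1, cs.length_inv, cs.length_inv]
    exact hu
  have hw' : ℓ (s j * w⁻¹) < ℓ w⁻¹ := by
    rw [e1, cs.length_inv, cs.length_inv]
    exact hw
  have H := lift_ud_min cs (bruhatLE_inv cs h) hu' hw'
  rw [e1] at H
  have H2 := bruhatLE_inv cs H
  rwa [inv_inv, inv_inv] at H2

/-- Deodhar's lemma (the special case we need): if `v·s j` goes up, `s i0·v` goes up, but
`s i0·v·s j` comes back down, then `s i0 v = v s j`. -/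
theorem deodhar {v : W} {i0 j : B} (hvj : ℓ v < ℓ (v * s j)) (hup : ℓ v < ℓ (s i0 * v))
    (hdown : ℓ (s i0 * v * s j) < ℓ (s i0 * v)) : s i0 * v = v * s j := by
  have hdvj := cs.length_mul_simple v j
  have hdup := cs.length_simple_mul v i0
  obtain ⟨μ, hμ, hμeq⟩ := cs.exists_reduced_word' v
  have hμlen : μ.length = ℓ v := by rw [hμeq]; exact hμ.symm
  have hxeq : π (μ ++ [j]) = v * s j := by
    rw [cs.wordProd_append, cs.wordProd_singleton, ← hμeq]
  have hxred : cs.IsReduced (μ ++ [j]) := by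
    show ℓ (π (μ ++ [j])) = (μ ++ [j]).length
    rw [hxeq]
    simp only [List.length_append, List.length_singleton]
    omega
  have hlinv : ℓ (s i0 * (v * s j)) < ℓ (v * s j) := by
    rw [← mul_assoc]
    omega
  obtain ⟨r, hr, hex⟩ := exists_left_exchange cs (cs.isReflection_simple i0) hlinv hxred hxeq
  rw [List.length_append, List.length_singleton] at hr
  rcases Nat.lt_or_ge r μ.length with hrμ | hrμ
  · exfalso
    rw [List.eraseIdx_append_of_lt_length hrμ, cs.wordProd_append,
      cs.wordProd_singleton, ← mul_assoc] at hex
    have h2 : s i0 * v = π (μ.eraseIdx r) := by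
      exact mul_right_cancel hex
    have h3 := cs.length_wordProd_le (μ.eraseIdx r)
    have h4 : (μ.eraseIdx r).length + 1 = μ.length := List.length_eraseIdx_add_one hrμ
    rw [← h2] at h3
    omega
  · have hreq : r = μ.length := by omega
    subst hreq
    rw [List.eraseIdx_append_of_length_le le_rfl, Nat.sub_self,
      List.eraseIdx_cons_zero, List.append_nil, ← hμeq] at hex
    rw [← mul_assoc] at hex
    calc s i0 * v = s i0 * v * s j * s j := by rw [cs.simple_mul_simple_cancel_right]
      _ = v * s j := by rw [hex]

/-- Left descents preserve the right quotient. -/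
theorem quot_of_left_descent {w : W} {i0 : B} {I : Set B}
    (hwQ : ∀ j ∈ I, ℓ w < ℓ (w * s j)) (hdw : ℓ (s i0 * w) < ℓ w) :
    ∀ j ∈ I, ℓ (s i0 * w) < ℓ (s i0 * w * s j) := by
  intro j hj
  have h1 := hwQ j hj
  have h2 := cs.length_mul_simple w j
  have h3 := cs.length_simple_mul (w * s j) i0
  have h4 := cs.length_simple_mul w i0
  rw [mul_assoc]
  omega

private theorem chain_len {k : ℕ} {c : ℕ → W}
    (hstep : ∀ r < k, ℓ (c (r + 1)) = ℓ (c r) + 1) :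
    ∀ r ≤ k, ℓ (c r) = ℓ (c 0) + r := by
  intro r
  induction r with
  | zero => intro _; rfl
  | succ r ih =>
    intro hr
    rw [hstep r (by omega), ih (by omega)]
    omega

open scoped Classical in
theorem quotient_chain_aux (I : Set B) : ∀ n : ℕ, ∀ w u : W, ℓ w ≤ n →
    (∀ j ∈ I, ℓ u < ℓ (u * s j)) → (∀ j ∈ I, ℓ w < ℓ (w * s j)) →
    BruhatLE cs u w → u ≠ w →
    ∃ (k : ℕ) (c : ℕ → W), c 0 = u ∧ c k = w ∧
      (∀ r ≤ k, ∀ j ∈ I, ℓ (c r) < ℓ (c r * s j)) ∧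
      (∀ r < k, BruhatLE cs (c r) (c (r + 1)) ∧ ℓ (c (r + 1)) = ℓ (c r) + 1) := by
  intro n
  induction n using Nat.strong_induction_on with
  | _ n IH =>
  intro w u hwn huQ hwQ hle hne
  have hlt : ℓ u < ℓ w := by
    have h1 := length_le_of_le cs hle
    rcases Nat.lt_or_ge (ℓ u) (ℓ w) with h | h
    · exact h
    · exact absurd (eq_of_le_of_length_le cs hle h) hne
  have hw1 : w ≠ 1 := by
    intro h
    rw [h, cs.length_one] at hlt
    omega
  obtain ⟨i0, hdesc⟩ := cs.exists_leftDescent_of_ne_one hw1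
  have hdesc' : ℓ (s i0 * w) < ℓ w := hdesc
  have hdw := cs.length_simple_mul w i0
  have hswQ := quot_of_left_descent cs hwQ hdesc'
  by_cases hA : BruhatLE cs u (s i0 * w)
  · by_cases hA2 : u = s i0 * w
    · -- u is covered by w : the two-element chain works
      refine ⟨1, fun r => if r = 0 then u else w, by simp, by simp, ?_, ?_⟩
      · intro r hr j hj
        match r, hr with
        | 0, _ => simpa using huQ j hj
        | 1, _ => simpa using hwQ j hj
      · intro r hr
        have hr0 : r = 0 := by omega
        subst hr0
        have hul : ℓ u = ℓ (s i0 * w) := by rw [hA2]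
        refine ⟨by simpa using hle, ?_⟩
        dsimp only
        norm_num
        omega
    · -- recurse on (u, s i0 * w) and append w
      obtain ⟨k, c, hc0, hck, hmem, hstep⟩ := IH (ℓ (s i0 * w)) (by omega) (s i0 * w) u
        le_rfl huQ hswQ hA hA2
      refine ⟨k + 1, fun r => if r ≤ k then c r else w, ?_, ?_, ?_, ?_⟩
      · dsimp only; rw [if_pos (Nat.zero_le k)]; exact hc0
      · dsimp only; rw [if_neg (by omega)]
      · intro r hr j hj
        dsimp only
        by_cases hrk : r ≤ k
        · rw [if_pos hrk]; exact hmem r hrk j hj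
        · rw [if_neg hrk]; exact hwQ j hj
      · intro r hr
        dsimp only
        by_cases hrk : r < k
        · rw [if_pos (by omega : r ≤ k), if_pos (by omega : r + 1 ≤ k)]
          exact hstep r hrk
        · have hrk' : r = k := by omega
          subst hrk'
          rw [if_pos le_rfl, if_neg (by omega), hck]
          exact ⟨Relation.ReflTransGen.single (step_simple_mul' cs i0 hdesc'), by omega⟩
  · -- u does not lie below s i0 * w; then s i0 * u < u and we recurse on the pair
    have hdu := cs.length_simple_mul u i0
    have hud : ℓ (s i0 * u) < ℓ u := by
      rcases Nat.lt_or_ge (ℓ (s i0 * u)) (ℓ u) with h | h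
      · exact h
      · exact absurd (lift_ud_min cs hle (by omega) hdesc') hA
    have hsuQ := quot_of_left_descent cs huQ hud
    have hsule := lift_dd cs hle hud hdesc'
    have hne2 : s i0 * u ≠ s i0 * w := fun h => hne (mul_left_cancel h)
    obtain ⟨k, c, hc0, hck, hmem, hstep⟩ := IH (ℓ (s i0 * w)) (by omega) (s i0 * w) (s i0 * u)
      le_rfl hsuQ hswQ hsule hne2
    have hlenc : ∀ r ≤ k, ℓ (c r) = ℓ (s i0 * u) + r := by
      have h := chain_len cs (k := k) (c := c) (fun r hr => (hstep r hr).2)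
      intro r hr
      rw [h r hr, hc0]
    have hk1 : 1 ≤ k := by
      by_contra h
      have hk0 : k = 0 := by omega
      exact hne2 (by rw [← hc0, ← hck, hk0])
    have hkval : ℓ (s i0 * w) = ℓ (s i0 * u) + k := by
      rw [← hck]
      exact hlenc k le_rfl
    -- goodness of positions along the chain
    have hG0 : ℓ (c 0) < ℓ (s i0 * c 0) ∧ ∀ j ∈ I, ℓ (s i0 * c 0) < ℓ (s i0 * c 0 * s j) := by
      rw [hc0, cs.simple_mul_simple_cancel_left]
      exact ⟨hud, huQ⟩
    have hGk : ℓ (c k) < ℓ (s i0 * c k) ∧ ∀ j ∈ I, ℓ (s i0 * c k) < ℓ (s i0 * c k * s j) := by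
      rw [hck, cs.simple_mul_simple_cancel_left]
      exact ⟨hdesc', hwQ⟩
    have key : ∃ T, (1 ≤ T ∧ T ≤ k) ∧
        (∀ r < T, ℓ (c r) < ℓ (s i0 * c r) ∧
          ∀ j ∈ I, ℓ (s i0 * c r) < ℓ (s i0 * c r * s j)) ∧
        (T = k ∨ ¬ (ℓ (c T) < ℓ (s i0 * c T) ∧
          ∀ j ∈ I, ℓ (s i0 * c T) < ℓ (s i0 * c T * s j))) := by
      by_cases hEx : ∃ r, r ≤ k ∧ ¬ (ℓ (c r) < ℓ (s i0 * c r) ∧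
          ∀ j ∈ I, ℓ (s i0 * c r) < ℓ (s i0 * c r * s j))
      · obtain ⟨T, ⟨hTk, hTbad⟩, hTmin⟩ := exists_min_witness hEx
        refine ⟨T, ⟨?_, hTk⟩, ?_, Or.inr hTbad⟩
        · by_contra h
          have hT0 : T = 0 := by omega
          subst hT0
          exact hTbad hG0
        · intro r hr
          have h1 := hTmin r hr
          have hrk : r ≤ k := by omega
          by_contra hng
          exact h1 ⟨hrk, hng⟩
      · refine ⟨k, ⟨hk1, le_rfl⟩, fun r hr => ?_, Or.inl rfl⟩
        by_contra hng
        exact hEx ⟨r, by omega, hng⟩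
    obtain ⟨T, ⟨hT1, hTk⟩, hG, hTor⟩ := key
    obtain ⟨T', rfl⟩ : ∃ T', T = T' + 1 := ⟨T - 1, by omega⟩
    -- the junction : if the track breaks before k, the two tracks meet
    have hjunction : T' + 1 < k → s i0 * c T' = c (T' + 1) := by
      intro hTltk
      have hGT := hG T' (by omega)
      have hle1 : BruhatLE cs (c T') (c (T' + 1)) := (hstep T' (by omega)).1
      have hlT : ℓ (c (T' + 1)) = ℓ (c T') + 1 := (hstep T' (by omega)).2
      have hdT' := cs.length_simple_mul (c T') i0
      have hlen_eq : ℓ (s i0 * c T') = ℓ (c (T' + 1)) := by omega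
      have hdT1 := cs.length_simple_mul (c (T' + 1)) i0
      rcases Nat.lt_or_ge (ℓ (s i0 * c (T' + 1))) (ℓ (c (T' + 1))) with hdown | hup'
      · have h5 := lift_ud_max cs hle1 hGT.1 hdown
        exact eq_of_le_of_length_le cs h5 (by omega)
      · have hup : ℓ (c (T' + 1)) < ℓ (s i0 * c (T' + 1)) :=
          lt_of_le_of_ne hup' (cs.length_simple_mul_ne (c (T' + 1)) i0).symm
        have hPT := hTor.resolve_left (by omega)
        rw [not_and_or] at hPT
        rcases hPT with h' | h'
        · exact absurd hup (by omega)
        · push_neg at h'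
          obtain ⟨j, hj, hbad⟩ := h'
          have hdbad := cs.length_mul_simple (s i0 * c (T' + 1)) j
          have hbad' : ℓ (s i0 * c (T' + 1) * s j) < ℓ (s i0 * c (T' + 1)) := by omega
          have hdeo := deodhar cs (hmem (T' + 1) (by omega) j hj) hup hbad'
          have h6 : BruhatLE cs (s i0 * c T') (s i0 * c (T' + 1)) :=
            lift_uu cs hle1 hGT.1 hup
          rw [hdeo] at h6
          have hwcond : ℓ (c (T' + 1) * s j * s j) < ℓ (c (T' + 1) * s j) := by
            rw [cs.simple_mul_simple_cancel_right]
            exact hmem (T' + 1) (by omega) j hj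
          have h7 := lift_ud_min_right cs h6 (hGT.2 j hj) hwcond
          rw [cs.simple_mul_simple_cancel_right] at h7
          exact eq_of_le_of_length_le cs h7 (by omega)
    -- the final chain
    refine ⟨k, fun r => if r < T' + 1 then s i0 * c r else if r < k then c (r + 1) else w,
      ?_, ?_, ?_, ?_⟩
    · dsimp only; rw [if_pos (by omega : 0 < T' + 1), hc0, cs.simple_mul_simple_cancel_left]
    · dsimp only; rw [if_neg (by omega : ¬ k < T' + 1), if_neg (by omega : ¬ k < k)]
    · intro r hr j hj
      dsimp only
      by_cases h1 : r < T' + 1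
      · rw [if_pos h1]
        exact (hG r h1).2 j hj
      · rw [if_neg h1]
        by_cases h2 : r < k
        · rw [if_pos h2]
          exact hmem (r + 1) (by omega) j hj
        · rw [if_neg h2]
          exact hwQ j hj
    · intro r hr
      dsimp only
      have hdr := cs.length_simple_mul (c r) i0
      have hdr1 := cs.length_simple_mul (c (r + 1)) i0
      by_cases h1 : r + 1 < T' + 1
      · rw [if_pos (by omega : r < T' + 1), if_pos h1]
        have hsr := (hstep r (by omega)).1
        have hsl := (hstep r (by omega)).2
        have hGr := hG r (by omega)
        have hGr1 := hG (r + 1) (by omega)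
        exact ⟨lift_uu cs hsr hGr.1 hGr1.1, by omega⟩
      · by_cases h2 : r = T'
        · rw [h2]
          rw [if_pos (by omega : T' < T' + 1), if_neg (by omega : ¬ T' + 1 < T' + 1)]
          by_cases h3 : T' + 1 < k
          · rw [if_pos h3]
            have hj := hjunction h3
            have hs1 := (hstep (T' + 1) h3).1
            have hs1l := (hstep (T' + 1) h3).2
            have hl1 := (hstep T' (by omega)).2
            have hdT' := cs.length_simple_mul (c T') i0
            have hGT := hG T' (by omega)
            rw [hj]
            exact ⟨hs1, by omega⟩
          · have h4 : T' + 1 = k := by omega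
            rw [if_neg (by omega)]
            have hsr := (hstep T' (by omega : T' < k)).1
            have hsl := (hstep T' (by omega)).2
            have hGr := hG T' (by omega)
            have hup_k : ℓ (c (T' + 1)) < ℓ (s i0 * c (T' + 1)) := by
              rw [h4]
              exact hGk.1
            have h5 := lift_uu cs hsr hGr.1 hup_k
            have h6 : s i0 * c (T' + 1) = w := by
              rw [h4, hck, cs.simple_mul_simple_cancel_left]
            rw [h6] at h5
            have hdT1' := cs.length_simple_mul (c (T' + 1)) i0
            have hdT2 := cs.length_simple_mul (c T') i0
            have hGr1 := hGr.1
            refine ⟨h5, ?_⟩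
            have : ℓ (c (T' + 1)) = ℓ (s i0 * w) := by rw [h4, hck]
            omega
        · -- r ≥ T' + 1
          have h5 : ¬ r < T' + 1 := by omega
          rw [if_neg h5, if_neg (by omega : ¬ r + 1 < T' + 1), if_pos hr]
          by_cases h6 : r + 1 < k
          · rw [if_pos h6]
            exact hstep (r + 1) h6
          · have h7 : r + 1 = k := by omega
            rw [if_neg (by omega)]
            constructor
            · rw [h7, hck]
              exact Relation.ReflTransGen.single (step_simple_mul' cs i0 hdesc')
            · have : ℓ (c (r + 1)) = ℓ (s i0 * w) := by rw [h7, hck]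
              omega

/-- Chain property of the quotient `W^I`: if `u < w` in `W^I`, there is a chain
`u = v₀ < v₁ < ⋯ < v_k = w` inside `W^I` with `ℓ(v_{i+1}) = ℓ(v_i) + 1`. -/
theorem quotient_chain_property (cs : CoxeterSystem M W) (I : Set B) (u w : W)
    (hu : ∀ i ∈ I, cs.length u < cs.length (u * cs.simple i))
    (hw : ∀ i ∈ I, cs.length w < cs.length (w * cs.simple i))
    (huw : BruhatLE cs u w) (hne : u ≠ w) :
    ∃ (k : ℕ) (c : ℕ → W), c 0 = u ∧ c k = w ∧
      (∀ i ≤ k, ∀ j ∈ I, cs.length (c i) < cs.length (c i * cs.simple j)) ∧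
      (∀ i < k, BruhatLE cs (c i) (c (i + 1)) ∧
        cs.length (c (i + 1)) = cs.length (c i) + 1) := by
  obtain ⟨k, c, h0, hk, hmem, hstep⟩ :=
    quotient_chain_aux cs I (cs.length w) w u le_rfl hu hw huw hne
  exact ⟨k, c, h0, hk, hmem, hstep⟩

end CoxeterBruhat
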